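/- The characteristic polynomial of the inherent projection matrix M (the Jacobian of the LPAA map at the origin) is λ⁴ - (1-μ_a)λ³ - b(1-μ_l)(1-μ_p), and M has an eigenvalue of modulus at least 1 greater than or equal to 1 if and only if R₀ = b(1-μ_l)(1-μ_p)/μ_a ≥ 1. In particular, all eigenvalues of M have modulus strictly less than 1 if and only if R₀ < 1. -/

import Mathlib

open Polynomial

lemma det4 {R : Type*} [CommRing R] (a11 a12 a13 a14 a21 a22 a23 a24 a31 a32 a33 a34 a41 a42 a43 a44 : R) :
    Matrix.det !![a11,a12,a13,a14; a21,a22,a23,a24; a31,a32,a33,a34; a41,a42,a43,a44] =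
      a11*(a22*(a33*a44-a34*a43) - a23*(a32*a44-a34*a42) + a24*(a32*a43-a33*a42))
    - a12*(a21*(a33*a44-a34*a43) - a23*(a31*a44-a34*a41) + a24*(a31*a43-a33*a41))
    + a13*(a21*(a32*a44-a34*a42) - a22*(a31*a44-a34*a41) + a24*(a31*a42-a32*a41))
    - a14*(a21*(a32*a43-a33*a42) - a22*(a31*a43-a33*a41) + a23*(a31*a42-a32*a41)) := by
  rw [Matrix.det_succ_row_zero]
  simp [Fin.sum_univ_succ, Matrix.det_fin_three, Fin.succAbove]
  ring

theorem stmt_8 (b μl μp μa : ℝ) (hb : 0 < b)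
    (hμl : μl ∈ Set.Ioo (0:ℝ) 1) (hμp : μp ∈ Set.Ioo (0:ℝ) 1) (hμa : μa ∈ Set.Ioo (0:ℝ) 1)
    (M : Matrix (Fin 4) (Fin 4) ℝ)
    (hM : M = !![0, 0, 0, b;
                 1 - μl, 0, 0, 0;
                 0, 1 - μp, 0, 0;
                 0, 0, 1, 1 - μa])
    (R₀ : ℝ) (hR₀ : R₀ = b * (1 - μl) * (1 - μp) / μa) :
    M.charpoly = X ^ 4 - C (1 - μa) * X ^ 3 - C (b * (1 - μl) * (1 - μp)) ∧
    ((∃ z : ℂ, (M.charpoly.map (algebraMap ℝ ℂ)).IsRoot z ∧ 1 ≤ ‖z‖) ↔ 1 ≤ R₀) ∧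
    ((∀ z : ℂ, (M.charpoly.map (algebraMap ℝ ℂ)).IsRoot z → ‖z‖ < 1) ↔ R₀ < 1) := by
  obtain ⟨hl0, hl1⟩ := hμl
  obtain ⟨hp0, hp1⟩ := hμp
  obtain ⟨ha0, ha1⟩ := hμa
  set a : ℝ := 1 - μa with ha_def
  set c : ℝ := b * (1 - μl) * (1 - μp) with hc_def
  have ha' : 0 < a := by simp [ha_def]; linarith
  have ha'' : a < 1 := by simp [ha_def]; linarith
  have hc : 0 < c := by
    apply mul_pos (mul_pos hb (by linarith)) (by linarith)
  -- charpoly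
  have hcp : M.charpoly = X ^ 4 - C a * X ^ 3 - C c := by
    rw [Matrix.charpoly, hM]
    have h : (!![0, 0, 0, b; 1 - μl, 0, 0, 0; 0, 1 - μp, 0, 0; 0, 0, 1, 1 - μa] :
        Matrix (Fin 4) (Fin 4) ℝ).charmatrix
        = !![X, 0, 0, -C b; -C (1-μl), X, 0, 0; 0, -C (1-μp), X, 0; 0, 0, -C 1, X - C (1-μa)] := by
      ext i j
      fin_cases i <;> fin_cases j <;>
        simp [Matrix.charmatrix_apply, Matrix.vecHead, Matrix.vecTail]
    rw [h, det4]
    simp only [ha_def, hc_def, map_sub, map_mul, map_one]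
    ring
  -- R₀ ≥ 1 ↔ μa ≤ c
  have hR : (1 ≤ R₀) ↔ μa ≤ c := by
    rw [hR₀, le_div_iff₀ ha0, one_mul]
  -- root characterization
  have hroot : ∀ z : ℂ, (M.charpoly.map (algebraMap ℝ ℂ)).IsRoot z ↔
      z ^ 4 - (a : ℂ) * z ^ 3 - (c : ℂ) = 0 := by
    intro z
    rw [hcp]
    simp [Polynomial.IsRoot, Polynomial.eval_map, Complex.coe_algebraMap]
  -- key iff
  have key : (∃ z : ℂ, (M.charpoly.map (algebraMap ℝ ℂ)).IsRoot z ∧ 1 ≤ ‖z‖) ↔ 1 ≤ R₀ := by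
    rw [hR]
    constructor
    · rintro ⟨z, hz, hz1⟩
      rw [hroot, sub_sub, sub_eq_zero] at hz
      set r : ℝ := ‖z‖ with hr_def
      have hr4 : r ^ 4 ≤ a * r ^ 3 + c := by
        have h1 : ‖z ^ 4‖ = r ^ 4 := by simp [hr_def]
        have h2 : ‖(a:ℂ) * z ^ 3 + (c:ℂ)‖ ≤ a * r ^ 3 + c := by
          refine le_trans (norm_add_le _ _) ?_
          simp [hr_def, abs_of_pos ha', abs_of_pos hc]
        rw [hz] at h1
        linarith
      by_contra hcon
      push_neg at hcon
      have h3 : (1:ℝ) ≤ r ^ 3 := one_le_pow₀ hz1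
      have h4 : (1:ℝ) * (1 - a) ≤ r ^ 3 * (r - a) :=
        mul_le_mul h3 (by linarith) (by linarith) (by positivity)
      nlinarith
    · intro hac
      set x₀ : ℝ := a + c + 1 with hx0_def
      have hx1 : (1:ℝ) ≤ x₀ := by simp [hx0_def]; linarith
      have hf1 : (1:ℝ) ^ 4 - a * 1 ^ 3 - c ≤ 0 := by simp; linarith
      have hfx0 : 0 ≤ x₀ ^ 4 - a * x₀ ^ 3 - c := by
        have h3 : (1:ℝ) ≤ x₀ ^ 3 := one_le_pow₀ hx1
        have h4 : (1:ℝ) * (c + 1) ≤ x₀ ^ 3 * (x₀ - a) := by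
          apply mul_le_mul h3 (by simp [hx0_def]; linarith) (by linarith) (by positivity)
        nlinarith
      have hcont : ContinuousOn (fun x : ℝ => x ^ 4 - a * x ^ 3 - c) (Set.Icc 1 x₀) := by
        fun_prop
      have := intermediate_value_Icc hx1 hcont
      have hmem : (0:ℝ) ∈ Set.Icc ((1:ℝ) ^ 4 - a * 1 ^ 3 - c) (x₀ ^ 4 - a * x₀ ^ 3 - c) :=
        ⟨hf1, hfx0⟩
      obtain ⟨x, hx, hfx⟩ := this hmem
      refine ⟨(x : ℂ), ?_, ?_⟩
      · rw [hroot]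
        have h0 : x ^ 4 - a * x ^ 3 - c = 0 := hfx
        calc (x:ℂ) ^ 4 - (a:ℂ) * (x:ℂ) ^ 3 - (c:ℂ)
            = ((x ^ 4 - a * x ^ 3 - c : ℝ) : ℂ) := by push_cast; ring
          _ = 0 := by rw [h0]; simp
      · rw [Complex.norm_real, Real.norm_eq_abs]
        exact le_trans hx.1 (le_abs_self x)
  refine ⟨hcp, key, ?_⟩
  constructor
  · intro h
    by_contra h'
    push_neg at h'
    obtain ⟨z, hz, hz1⟩ := key.mpr h'
    exact absurd (h z hz) (not_lt.mpr hz1)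
  · intro h z hz
    by_contra h'
    push_neg at h'
    have := key.mp ⟨z, hz, h'⟩
    linarith
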